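/- On the generators of the fusion algebra A^f (writing t, t̃ ∈ εAε, u, ũ ∈ e₂Aε, v, ṽ ∈ εAe₂, w, w̃ ∈ e₂Ae₂), the fusion double bracket ⟪-,-⟫_{fus} is given by: ⟪t,t̃⟫_{fus} = 0; ⟪t,e₁₂u⟫_{fus} = (1/2)(e₁⊗te₁₂u − e₁t⊗e₁₂u); ⟪t,ve₂₁⟫_{fus} = (1/2)(ve₂₁t⊗e₁ − ve₂₁⊗te₁); ⟪t,e₁₂we₂₁⟫_{fus} = (1/2)(e₁₂we₂₁t⊗e₁ + e₁⊗te₁₂we₂₁ − e₁₂we₂₁⊗te₁ − e₁t⊗e₁₂we₂₁); ⟪e₁₂u,t⟫_{fus} = (1/2)(e₁₂u⊗e₁t − te₁₂u⊗e₁); ⟪e₁₂u,e₁₂ũ⟫_{fus} = (1/2)(e₁⊗e₁₂ue₁₂ũ − e₁₂ũe₁₂u⊗e₁); ⟪e₁₂u,ve₂₁⟫_{fus} = (1/2)(e₁₂u⊗e₁ve₂₁ − ve₂₁⊗e₁₂ue₁); ⟪e₁₂u,e₁₂we₂₁⟫_{fus} = (1/2)(e₁⊗e₁₂ue₁₂we₂₁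 − e₁₂we₂₁⊗e₁₂ue₁); ⟪ve₂₁,t⟫_{fus} = (1/2)(te₁⊗ve₂₁ − e₁⊗ve₂₁t); ⟪ve₂₁,e₁₂u⟫_{fus} = (1/2)(e₁₂ue₁⊗ve₂₁ − e₁ve₂₁⊗e₁₂u); ⟪ve₂₁,ṽe₂₁⟫_{fus} = (1/2)(ṽe₂₁ve₂₁⊗e₁ − e₁⊗ve₂₁ṽe₂₁); ⟪ve₂₁,e₁₂we₂₁⟫_{fus} = (1/2)(e₁₂we₂₁ve₂₁⊗e₁ − e₁ve₂₁⊗e₁₂we₂₁); ⟪e₁₂we₂₁,t⟫_{fus} = (1/2)(te₁⊗e₁₂we₂₁ + e₁₂we₂₁⊗e₁t − te₁₂we₂₁⊗e₁ − e₁⊗e₁₂we₂₁t); ⟪e₁₂we₂₁,e₁₂u⟫_{fus} = (1/2)(e₁₂ue₁⊗e₁₂we₂₁ − e₁₂ue₁₂we₂₁⊗e₁); ⟪e₁₂we₂₁,ve₂₁⟫_{fus} = (1/2)(e₁₂we₂₁⊗e₁ve₂₁ − e₁⊗e₁₂we₂₁ve₂₁); ⟪e₁₂we₂₁,e₁₂w̃e₂₁⟫_{fus}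 = 0. -/

import Mathlib

open TensorProduct

/-- A double bracket on a `k`-algebra `A` (Van den Bergh): a bilinear map
`A × A → A ⊗ A` which is cyclically antisymmetric and a derivation in its second
argument for the outer bimodule structure on `A ⊗ A`. -/
structure DoubleBracket (k A : Type*) [CommRing k] [Ring A] [Algebra k A] where
  br : A →ₗ[k] A →ₗ[k] A ⊗[k] A
  antisymm : ∀ a b : A, br a b = - (TensorProduct.comm k A A) (br b a)
  deriv : ∀ a b c : A,
    br a (b * c) = br a b * ((1 : A) ⊗ₜ[k] c) + (b ⊗ₜ[k] (1 : A)) * br a c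

section Core

variable (k : Type*) [CommRing k] (A : Type*) [Ring A] [Algebra k A]

/-- The cyclic permutation `x ⊗ y ⊗ z ↦ z ⊗ x ⊗ y` on the triple tensor product. -/
noncomputable def cyc3 : A ⊗[k] (A ⊗[k] A) ≃ₗ[k] A ⊗[k] (A ⊗[k] A) :=
  (TensorProduct.assoc k A A A).symm.trans (TensorProduct.comm k (A ⊗[k] A) A)

variable {k A}

/-- Apply a double bracket (as a bilinear map) to the first tensor factor,
`x ⊗ y ↦ ⟪a, x⟫ ⊗ y`. -/
noncomputable def leftExtOf (br : A →ₗ[k] A →ₗ[k] A ⊗[k] A) (a : A) :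
    A ⊗[k] A →ₗ[k] A ⊗[k] (A ⊗[k] A) :=
  (TensorProduct.assoc k A A A).toLinearMap.comp (TensorProduct.map (br a) LinearMap.id)

/-- The triple bracket associated to (the underlying bilinear map of) a double bracket:
`⟪a,b,c⟫ = ⟪a,⟪b,c⟫'⟫ ⊗ ⟪b,c⟫'' + τ(⟪b,⟪c,a⟫'⟫ ⊗ ⟪c,a⟫'') + τ²(⟪c,⟪a,b⟫'⟫ ⊗ ⟪a,b⟫'')`. -/
noncomputable def tripleOf (br : A →ₗ[k] A →ₗ[k] A ⊗[k] A) (a b c : A) :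
    A ⊗[k] (A ⊗[k] A) :=
  leftExtOf br a (br b c) + cyc3 k A (leftExtOf br b (br c a))
    + cyc3 k A (cyc3 k A (leftExtOf br c (br a b)))

/-- The triple bracket associated to a double bracket. -/
noncomputable def DoubleBracket.triple (D : DoubleBracket k A) (a b c : A) :
    A ⊗[k] (A ⊗[k] A) :=
  tripleOf D.br a b c

end Core

/-- A double bracket is quasi-Poisson over the ground field `k` (i.e. with respect to
the trivial idempotent decomposition `1 = 1`). -/
def DoubleBracket.IsQuasiPoisson {k A : Type*} [Field k] [Ring A] [Algebra k A]
    (D : DoubleBracket k A) : Prop :=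
  ∀ a b c : A, D.triple a b c = (4⁻¹ : k) •
    ((c * a) ⊗ₜ[k] (b ⊗ₜ[k] (1 : A)) - (c * a) ⊗ₜ[k] ((1 : A) ⊗ₜ[k] b)
      - c ⊗ₜ[k] ((a * b) ⊗ₜ[k] (1 : A)) + c ⊗ₜ[k] (a ⊗ₜ[k] b)
      - a ⊗ₜ[k] (b ⊗ₜ[k] c) + a ⊗ₜ[k] ((1 : A) ⊗ₜ[k] (b * c))
      + (1 : A) ⊗ₜ[k] ((a * b) ⊗ₜ[k] c) - (1 : A) ⊗ₜ[k] (a ⊗ₜ[k] (b * c)))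

section Fusion

variable (k : Type*) [Field k] (A : Type*) [Ring A] [Algebra k A]

/-- Relations presenting the extension algebra `Ā = A *_B B̄`, where `B̄ = Mat₂(k) ⊕ kμ`:
`Ā` is generated by the elements of `A` together with two new generators `e₁₂, e₂₁`
subject to `e₁₂e₂₁ = e₁`, `e₂₁e₁₂ = e₂`, `e₁e₁₂ = e₁₂ = e₁₂e₂`, `e₂e₂₁ = e₂₁ = e₂₁e₁`. -/
inductive FusionRel (e1 e2 : A) :
    FreeAlgebra k (A ⊕ Fin 2) → FreeAlgebra k (A ⊕ Fin 2) → Prop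
  | add (a b : A) : FusionRel e1 e2
      (FreeAlgebra.ι k (Sum.inl a) + FreeAlgebra.ι k (Sum.inl b))
      (FreeAlgebra.ι k (Sum.inl (a + b)))
  | smul (c : k) (a : A) : FusionRel e1 e2
      (c • FreeAlgebra.ι k (Sum.inl a)) (FreeAlgebra.ι k (Sum.inl (c • a)))
  | mul (a b : A) : FusionRel e1 e2
      (FreeAlgebra.ι k (Sum.inl a) * FreeAlgebra.ι k (Sum.inl b))
      (FreeAlgebra.ι k (Sum.inl (a * b)))
  | one : FusionRel e1 e2 (FreeAlgebra.ι k (Sum.inl 1)) 1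
  | mul1221 : FusionRel e1 e2
      (FreeAlgebra.ι k (Sum.inr 0) * FreeAlgebra.ι k (Sum.inr 1))
      (FreeAlgebra.ι k (Sum.inl e1))
  | mul2112 : FusionRel e1 e2
      (FreeAlgebra.ι k (Sum.inr 1) * FreeAlgebra.ι k (Sum.inr 0))
      (FreeAlgebra.ι k (Sum.inl e2))
  | e1mul12 : FusionRel e1 e2
      (FreeAlgebra.ι k (Sum.inl e1) * FreeAlgebra.ι k (Sum.inr 0))
      (FreeAlgebra.ι k (Sum.inr 0))
  | mul12e2 : FusionRel e1 e2
      (FreeAlgebra.ι k (Sum.inr 0) * FreeAlgebra.ι k (Sum.inl e2))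
      (FreeAlgebra.ι k (Sum.inr 0))
  | e2mul21 : FusionRel e1 e2
      (FreeAlgebra.ι k (Sum.inl e2) * FreeAlgebra.ι k (Sum.inr 1))
      (FreeAlgebra.ι k (Sum.inr 1))
  | mul21e1 : FusionRel e1 e2
      (FreeAlgebra.ι k (Sum.inr 1) * FreeAlgebra.ι k (Sum.inl e1))
      (FreeAlgebra.ι k (Sum.inr 1))

/-- The extension algebra `Ā = A *_B B̄` of `A` along the pair of idempotents
`(e1, e2)`. -/
abbrev ExtAlg (e1 e2 : A) := RingQuot (FusionRel k A e1 e2)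

variable (e1 e2 : A)

/-- The canonical map `A → Ā`. -/
noncomputable def extι : A →ₐ[k] ExtAlg k A e1 e2 where
  toFun a := RingQuot.mkAlgHom k (FusionRel k A e1 e2) (FreeAlgebra.ι k (Sum.inl a))
  map_one' := by
    simpa using RingQuot.mkAlgHom_rel k
      (FusionRel.one (k := k) (A := A) (e1 := e1) (e2 := e2))
  map_mul' a b := by
    have h := RingQuot.mkAlgHom_rel k
      (FusionRel.mul (k := k) (A := A) (e1 := e1) (e2 := e2) a b)
    rw [map_mul] at h
    exact h.symm
  map_zero' := by
    have h := RingQuot.mkAlgHom_rel k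
      (FusionRel.smul (k := k) (A := A) (e1 := e1) (e2 := e2) 0 1)
    rw [map_smul, zero_smul, zero_smul] at h
    exact h.symm
  map_add' a b := by
    have h := RingQuot.mkAlgHom_rel k
      (FusionRel.add (k := k) (A := A) (e1 := e1) (e2 := e2) a b)
    rw [map_add] at h
    exact h.symm
  commutes' c := by
    have h := RingQuot.mkAlgHom_rel k
      (FusionRel.smul (k := k) (A := A) (e1 := e1) (e2 := e2) c 1)
    have h1 : (RingQuot.mkAlgHom k (FusionRel k A e1 e2))
        (FreeAlgebra.ι k (Sum.inl (1 : A))) = 1 := by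
      simpa using RingQuot.mkAlgHom_rel k
        (FusionRel.one (k := k) (A := A) (e1 := e1) (e2 := e2))
    rw [map_smul, h1] at h
    rw [Algebra.algebraMap_eq_smul_one, Algebra.algebraMap_eq_smul_one]
    exact h.symm

/-- The matrix unit `e₁₂ ∈ Ā`. -/
noncomputable def ext12 : ExtAlg k A e1 e2 :=
  RingQuot.mkAlgHom k (FusionRel k A e1 e2) (FreeAlgebra.ι k (Sum.inr 0))

/-- The matrix unit `e₂₁ ∈ Ā`. -/
noncomputable def ext21 : ExtAlg k A e1 e2 :=
  RingQuot.mkAlgHom k (FusionRel k A e1 e2) (FreeAlgebra.ι k (Sum.inr 1))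

/-- The idempotent `ε = 1 − e₂ ∈ Ā`; the fusion algebra is the corner
`A^f = ε Ā ε`. -/
noncomputable def extEps : ExtAlg k A e1 e2 := 1 - extι k A e1 e2 e2

variable {k A e1 e2}

/-- Membership in the fusion algebra `A^f = ε Ā ε ⊆ Ā`. -/
def InCorner (x : ExtAlg k A e1 e2) : Prop :=
  extEps k A e1 e2 * x * extEps k A e1 e2 = x

end Fusion

/-- The data of a double bracket on the corner algebra `A^f = ε Ā ε` (whose unit is
`ε`), recorded as a bilinear map on `Ā`: it is cyclically antisymmetric, satisfies the
derivation rule on corner elements, and takes corner values on corner elements. -/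
structure CornerDoubleBracket (k R : Type*) [Field k] [Ring R] [Algebra k R]
    (ε : R) where
  br : R →ₗ[k] R →ₗ[k] R ⊗[k] R
  antisymm : ∀ a b : R, br a b = - (TensorProduct.comm k R R) (br b a)
  deriv : ∀ a b c : R, ε * a * ε = a → ε * b * ε = b → ε * c * ε = c →
    br a (b * c) = br a b * ((1 : R) ⊗ₜ[k] c) + (b ⊗ₜ[k] (1 : R)) * br a c
  corner_val : ∀ a b : R, ε * a * ε = a → ε * b * ε = b →
    br a b = (ε ⊗ₜ[k] ε) * br a b * (ε ⊗ₜ[k] ε)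

section GaugeTr

variable {k : Type*} [Field k] {A : Type*} [Ring A] [Algebra k A] {e1 e2 : A}

/-- The property of being (the extension to `Ā` of) the gauge element `E_s`: a double
derivation of `Ā` vanishing on `B̄` and given on `A` by
`E_s(a) = a e_s ⊗ e_s − e_s ⊗ e_s a`. -/
structure IsGaugeExt (es : A) (δ : ExtAlg k A e1 e2 →ₗ[k]
    ExtAlg k A e1 e2 ⊗[k] ExtAlg k A e1 e2) : Prop where
  leib : ∀ x y : ExtAlg k A e1 e2,
    δ (x * y) = δ x * ((1 : ExtAlg k A e1 e2) ⊗ₜ[k] y)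
      + (x ⊗ₜ[k] (1 : ExtAlg k A e1 e2)) * δ y
  on_A : ∀ a : A, δ (extι k A e1 e2 a) =
    (extι k A e1 e2 (a * es)) ⊗ₜ[k] (extι k A e1 e2 es)
      - (extι k A e1 e2 es) ⊗ₜ[k] (extι k A e1 e2 (es * a))
  on_e12 : δ (ext12 k A e1 e2) = 0
  on_e21 : δ (ext21 k A e1 e2) = 0

/-- The trace map on double derivations:
`Tr(δ)(a) = δ(a)'ε ⊗ εδ(a)'' + δ(a)'e₂₁ε ⊗ εe₁₂δ(a)''`. -/
noncomputable def TrOf (δ : ExtAlg k A e1 e2 →ₗ[k]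
    ExtAlg k A e1 e2 ⊗[k] ExtAlg k A e1 e2) :
    ExtAlg k A e1 e2 →ₗ[k] ExtAlg k A e1 e2 ⊗[k] ExtAlg k A e1 e2 :=
  (TensorProduct.map (LinearMap.mulRight k (extEps k A e1 e2))
      (LinearMap.mulLeft k (extEps k A e1 e2))).comp δ
    + (TensorProduct.map
        (LinearMap.mulRight k (ext21 k A e1 e2 * extEps k A e1 e2))
        (LinearMap.mulLeft k (extEps k A e1 e2 * ext12 k A e1 e2))).comp δ

end GaugeTr

/-- The bilinear operation `(x₁⊗x₂, y₁⊗y₂) ↦ (y₁x₂) ⊗ (x₁y₂)`; in Sweedler notation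
`sweedlerOp x y = y' x'' ⊗ x' y''`. -/
noncomputable def sweedlerOp (k A : Type*) [CommRing k] [Ring A] [Algebra k A] :
    (A ⊗[k] A) →ₗ[k] (A ⊗[k] A) →ₗ[k] (A ⊗[k] A) :=
  TensorProduct.lift (LinearMap.mk₂ k
    (fun x₁ x₂ => TensorProduct.map (LinearMap.mulRight k x₂) (LinearMap.mulLeft k x₁))
    (fun m₁ m₂ n => by
      have h : LinearMap.mulLeft k (m₁ + m₂) =
          LinearMap.mulLeft k m₁ + LinearMap.mulLeft k m₂ :=
        LinearMap.ext fun x => add_mul m₁ m₂ x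
      try dsimp only
      rw [h, TensorProduct.map_add_right])
    (fun c m n => by
      have h : LinearMap.mulLeft k (c • m) = c • LinearMap.mulLeft k m :=
        LinearMap.ext fun x => smul_mul_assoc c m x
      try dsimp only
      rw [h, TensorProduct.map_smul_right])
    (fun m n₁ n₂ => by
      have h : LinearMap.mulRight k (n₁ + n₂) =
          LinearMap.mulRight k n₁ + LinearMap.mulRight k n₂ :=
        LinearMap.ext fun x => mul_add x n₁ n₂
      try dsimp only
      rw [h, TensorProduct.map_add_left])
    (fun c m n => by
      have h : LinearMap.mulRight k (c • n) = c • LinearMap.mulRight k n :=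
        LinearMap.ext fun x => mul_smul_comm c x n
      try dsimp only
      rw [h, TensorProduct.map_smul_left]))

section FusBr

variable {k : Type*} [Field k] {A : Type*} [Ring A] [Algebra k A] {e1 e2 : A}

/-- The fusion double bracket associated to `−½ Tr(E₁)Tr(E₂)`:
`⟪a,b⟫_fus = −½ Tr(E₂)(b)'Tr(E₁)(a)'' ⊗ Tr(E₁)(a)'Tr(E₂)(b)''
            + ½ Tr(E₁)(b)'Tr(E₂)(a)'' ⊗ Tr(E₂)(a)'Tr(E₁)(b)''`. -/
noncomputable def fusBr
    (T1 T2 : ExtAlg k A e1 e2 →ₗ[k] ExtAlg k A e1 e2 ⊗[k] ExtAlg k A e1 e2) :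
    ExtAlg k A e1 e2 →ₗ[k] ExtAlg k A e1 e2 →ₗ[k]
      ExtAlg k A e1 e2 ⊗[k] ExtAlg k A e1 e2 :=
  LinearMap.mk₂ k
    (fun a b => (-(2⁻¹ : k)) • sweedlerOp k (ExtAlg k A e1 e2) (T1 a) (T2 b)
      + (2⁻¹ : k) • sweedlerOp k (ExtAlg k A e1 e2) (T2 a) (T1 b))
    (fun a₁ a₂ b => by
      simp only [map_add, LinearMap.add_apply, smul_add]
      abel)
    (fun c a b => by
      simp only [map_smul, LinearMap.smul_apply]
      rw [smul_comm (-(2⁻¹ : k)) c, smul_comm ((2⁻¹ : k)) c, smul_add])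
    (fun a b₁ b₂ => by
      simp only [map_add, smul_add]
      abel)
    (fun c a b => by
      simp only [map_smul]
      rw [smul_comm (-(2⁻¹ : k)) c, smul_comm ((2⁻¹ : k)) c, smul_add])

end FusBr

section Gens4

variable (k : Type*) [Field k] (A : Type*) [Ring A] [Algebra k A] (e1 e2 : A)

/-- First-type generator `ε ι(t) ε` of the fusion algebra. -/
noncomputable def gen1 (t : A) : ExtAlg k A e1 e2 :=
  extEps k A e1 e2 * extι k A e1 e2 t * extEps k A e1 e2

/-- Second-type generator `e₁₂ ι(u) ε`. -/
noncomputable def gen2 (u : A) : ExtAlg k A e1 e2 :=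
  ext12 k A e1 e2 * extι k A e1 e2 u * extEps k A e1 e2

/-- Third-type generator `ε ι(v) e₂₁`. -/
noncomputable def gen3 (v : A) : ExtAlg k A e1 e2 :=
  extEps k A e1 e2 * extι k A e1 e2 v * ext21 k A e1 e2

/-- Fourth-type generator `e₁₂ ι(w) e₂₁`. -/
noncomputable def gen4 (w : A) : ExtAlg k A e1 e2 :=
  ext12 k A e1 e2 * extι k A e1 e2 w * ext21 k A e1 e2

end Gens4

section MyFusionAux


variable {k : Type*} [Field k] {A : Type*} [Ring A] [Algebra k A] {e1 e2 : A}

lemma myrel_fg : ext12 k A e1 e2 * ext21 k A e1 e2 = extι k A e1 e2 e1 := by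
  have h := RingQuot.mkAlgHom_rel k
    (FusionRel.mul1221 (k := k) (A := A) (e1 := e1) (e2 := e2))
  rw [map_mul] at h
  exact h

lemma myrel_gf : ext21 k A e1 e2 * ext12 k A e1 e2 = extι k A e1 e2 e2 := by
  have h := RingQuot.mkAlgHom_rel k
    (FusionRel.mul2112 (k := k) (A := A) (e1 := e1) (e2 := e2))
  rw [map_mul] at h
  exact h

lemma myrel_e1f : extι k A e1 e2 e1 * ext12 k A e1 e2 = ext12 k A e1 e2 := by
  have h := RingQuot.mkAlgHom_rel k
    (FusionRel.e1mul12 (k := k) (A := A) (e1 := e1) (e2 := e2))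
  rw [map_mul] at h
  exact h

lemma myrel_fe2 : ext12 k A e1 e2 * extι k A e1 e2 e2 = ext12 k A e1 e2 := by
  have h := RingQuot.mkAlgHom_rel k
    (FusionRel.mul12e2 (k := k) (A := A) (e1 := e1) (e2 := e2))
  rw [map_mul] at h
  exact h

lemma myrel_e2g : extι k A e1 e2 e2 * ext21 k A e1 e2 = ext21 k A e1 e2 := by
  have h := RingQuot.mkAlgHom_rel k
    (FusionRel.e2mul21 (k := k) (A := A) (e1 := e1) (e2 := e2))
  rw [map_mul] at h
  exact h

lemma myrel_ge1 : ext21 k A e1 e2 * extι k A e1 e2 e1 = ext21 k A e1 e2 := by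
  have h := RingQuot.mkAlgHom_rel k
    (FusionRel.mul21e1 (k := k) (A := A) (e1 := e1) (e2 := e2))
  rw [map_mul] at h
  exact h

lemma mulv {R : Type*} [Ring R] {a b c : R} (h : a * b = c) (x : R) :
    a * (b * x) = c * x := by rw [← mul_assoc, h]

variable {k : Type*} [Field k] {A : Type*} [Ring A] [Algebra k A] {e1 e2 : A}

lemma myi11 (o11 : e1 * e1 = e1) :
    extι k A e1 e2 e1 * extι k A e1 e2 e1 = extι k A e1 e2 e1 := by
  rw [← map_mul, o11]

lemma myi12 (o12 : e1 * e2 = 0) : extι k A e1 e2 e1 * extι k A e1 e2 e2 = 0 := by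
  rw [← map_mul, o12, map_zero]

lemma myi21 (o21 : e2 * e1 = 0) : extι k A e1 e2 e2 * extι k A e1 e2 e1 = 0 := by
  rw [← map_mul, o21, map_zero]

lemma myi22 (o22 : e2 * e2 = e2) :
    extι k A e1 e2 e2 * extι k A e1 e2 e2 = extι k A e1 e2 e2 := by
  rw [← map_mul, o22]

lemma mye2f (o21 : e2 * e1 = 0) : extι k A e1 e2 e2 * ext12 k A e1 e2 = 0 := by
  conv_lhs => rw [← myrel_e1f]
  rw [← mul_assoc, myi21 o21, zero_mul]

lemma myfe1 (o21 : e2 * e1 = 0) : ext12 k A e1 e2 * extι k A e1 e2 e1 = 0 := by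
  conv_lhs => rw [← myrel_fe2]
  rw [mul_assoc, myi21 o21, mul_zero]

lemma myge2 (o12 : e1 * e2 = 0) : ext21 k A e1 e2 * extι k A e1 e2 e2 = 0 := by
  conv_lhs => rw [← myrel_ge1]
  rw [mul_assoc, myi12 o12, mul_zero]

lemma mye1g (o12 : e1 * e2 = 0) : extι k A e1 e2 e1 * ext21 k A e1 e2 = 0 := by
  conv_lhs => rw [← myrel_e2g]
  rw [← mul_assoc, myi12 o12, zero_mul]

lemma myepsf (o21 : e2 * e1 = 0) :
    extEps k A e1 e2 * ext12 k A e1 e2 = ext12 k A e1 e2 := by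
  simp only [extEps, sub_mul, one_mul, mye2f o21, sub_zero]

lemma myfeps : ext12 k A e1 e2 * extEps k A e1 e2 = 0 := by
  simp only [extEps, mul_sub, mul_one, myrel_fe2, sub_self]

lemma myepsg : extEps k A e1 e2 * ext21 k A e1 e2 = 0 := by
  simp only [extEps, sub_mul, one_mul, myrel_e2g, sub_self]

lemma mygeps (o12 : e1 * e2 = 0) :
    ext21 k A e1 e2 * extEps k A e1 e2 = ext21 k A e1 e2 := by
  simp only [extEps, mul_sub, mul_one, myge2 o12, sub_zero]

lemma myeps1 (o21 : e2 * e1 = 0) :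
    extEps k A e1 e2 * extι k A e1 e2 e1 = extι k A e1 e2 e1 := by
  simp only [extEps, sub_mul, one_mul, myi21 o21, sub_zero]

lemma my1eps (o12 : e1 * e2 = 0) :
    extι k A e1 e2 e1 * extEps k A e1 e2 = extι k A e1 e2 e1 := by
  simp only [extEps, mul_sub, mul_one, myi12 o12, sub_zero]

lemma myeps2 (o22 : e2 * e2 = e2) :
    extEps k A e1 e2 * extι k A e1 e2 e2 = 0 := by
  simp only [extEps, sub_mul, one_mul, myi22 o22, sub_self]

lemma my2eps (o22 : e2 * e2 = e2) :
    extι k A e1 e2 e2 * extEps k A e1 e2 = 0 := by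
  simp only [extEps, mul_sub, mul_one, myi22 o22, sub_self]

lemma myepseps (o22 : e2 * e2 = e2) :
    extEps k A e1 e2 * extEps k A e1 e2 = extEps k A e1 e2 := by
  simp only [extEps, mul_sub, mul_one, sub_mul, one_mul, myi22 o22]
  abel
lemma myt_mul_sub (x P Q : ExtAlg k A e1 e2 ⊗[k] ExtAlg k A e1 e2) :
    x * (P - Q) = x * P - x * Q := mul_sub x P Q

lemma myt_sub_mul (P Q x : ExtAlg k A e1 e2 ⊗[k] ExtAlg k A e1 e2) :
    (P - Q) * x = P * x - Q * x := sub_mul P Q x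

lemma myt_mul_add (x P Q : ExtAlg k A e1 e2 ⊗[k] ExtAlg k A e1 e2) :
    x * (P + Q) = x * P + x * Q := mul_add x P Q

lemma myt_add_mul (P Q x : ExtAlg k A e1 e2 ⊗[k] ExtAlg k A e1 e2) :
    (P + Q) * x = P * x + Q * x := add_mul P Q x

lemma myt_mul_zero (x : ExtAlg k A e1 e2 ⊗[k] ExtAlg k A e1 e2) :
    x * 0 = 0 := mul_zero x

lemma myt_zero_mul (x : ExtAlg k A e1 e2 ⊗[k] ExtAlg k A e1 e2) :
    0 * x = 0 := zero_mul x

lemma myt_mul_neg (x P : ExtAlg k A e1 e2 ⊗[k] ExtAlg k A e1 e2) :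
    x * (-P) = -(x * P) := by
  letI : Ring (ExtAlg k A e1 e2 ⊗[k] ExtAlg k A e1 e2) := inferInstance
  exact mul_neg x P

lemma myt_neg_mul (x P : ExtAlg k A e1 e2 ⊗[k] ExtAlg k A e1 e2) :
    (-P) * x = -(P * x) := by
  letI : Ring (ExtAlg k A e1 e2 ⊗[k] ExtAlg k A e1 e2) := inferInstance
  exact neg_mul P x

lemma mytmul (x₁ x₂ y₁ y₂ : ExtAlg k A e1 e2) :
    (x₁ ⊗ₜ[k] x₂) * (y₁ ⊗ₜ[k] y₂) = (x₁ * y₁) ⊗ₜ[k] (x₂ * y₂) :=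
  Algebra.TensorProduct.tmul_mul_tmul (R := k) x₁ y₁ x₂ y₂

lemma my_sweedlerOp_tmul {R : Type*} [Ring R] [Algebra k R]
    (x₁ x₂ y₁ y₂ : R) :
    sweedlerOp k R (x₁ ⊗ₜ[k] x₂) (y₁ ⊗ₜ[k] y₂) = (y₁ * x₂) ⊗ₜ[k] (x₁ * y₂) := by
  simp [sweedlerOp]

lemma myTrOf_apply (δ : ExtAlg k A e1 e2 →ₗ[k] ExtAlg k A e1 e2 ⊗[k] ExtAlg k A e1 e2)
    (a : ExtAlg k A e1 e2) :
    TrOf δ a =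
      TensorProduct.map (LinearMap.mulRight k (extEps k A e1 e2))
        (LinearMap.mulLeft k (extEps k A e1 e2)) (δ a)
      + TensorProduct.map
          (LinearMap.mulRight k (ext21 k A e1 e2 * extEps k A e1 e2))
          (LinearMap.mulLeft k (extEps k A e1 e2 * ext12 k A e1 e2)) (δ a) := rfl

lemma my_gauge_one {es : A}
    {δ : ExtAlg k A e1 e2 →ₗ[k] ExtAlg k A e1 e2 ⊗[k] ExtAlg k A e1 e2}
    (hδ : IsGaugeExt es δ) : δ 1 = 0 := by
  have h := hδ.leib 1 1
  rw [mul_one, ← Algebra.TensorProduct.one_def, mul_one, one_mul] at h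
  letI : Ring (ExtAlg k A e1 e2 ⊗[k] ExtAlg k A e1 e2) := inferInstance
  exact (left_eq_add.mp h)

lemma my_gauge_eps1 (o12 : e1 * e2 = 0) (o21 : e2 * e1 = 0)
    {δ : ExtAlg k A e1 e2 →ₗ[k] ExtAlg k A e1 e2 ⊗[k] ExtAlg k A e1 e2}
    (hδ : IsGaugeExt e1 δ) : δ (extEps k A e1 e2) = 0 := by
  simp only [extEps, map_sub, my_gauge_one hδ, hδ.on_A, o21, o12, map_zero,
    TensorProduct.zero_tmul, TensorProduct.tmul_zero, sub_zero, zero_sub, neg_zero,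
    sub_self]

lemma my_gauge_eps2 (o22 : e2 * e2 = e2)
    {δ : ExtAlg k A e1 e2 →ₗ[k] ExtAlg k A e1 e2 ⊗[k] ExtAlg k A e1 e2}
    (hδ : IsGaugeExt e2 δ) : δ (extEps k A e1 e2) = 0 := by
  simp only [extEps, map_sub, my_gauge_one hδ, hδ.on_A, o22, sub_self, zero_sub,
    neg_zero]

lemma my_gauge_sandwich {es : A}
    {δ : ExtAlg k A e1 e2 →ₗ[k] ExtAlg k A e1 e2 ⊗[k] ExtAlg k A e1 e2}
    (hδ : IsGaugeExt es δ) (x z : ExtAlg k A e1 e2)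
    (hx : δ x = 0) (hz : δ z = 0) (a : A) :
    δ (x * extι k A e1 e2 a * z) =
      (x * extι k A e1 e2 (a * es)) ⊗ₜ[k] (extι k A e1 e2 es * z)
      - (x * extι k A e1 e2 es) ⊗ₜ[k] (extι k A e1 e2 (es * a) * z) := by
  rw [hδ.leib (x * extι k A e1 e2 a) z, hz, hδ.leib x (extι k A e1 e2 a), hx,
    hδ.on_A]
  rw [zero_mul, zero_add, mul_zero, add_zero, myt_mul_sub, myt_sub_mul, mytmul,
    mytmul, mytmul, mytmul]
  rw [one_mul, mul_one, one_mul, mul_one]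
lemma mycEG2 (u : A) : extι k A e1 e2 e1 * gen2 k A e1 e2 u = gen2 k A e1 e2 u := by
  simp only [gen2, mul_assoc, mulv myrel_e1f]

lemma mycG3E (v : A) : gen3 k A e1 e2 v * extι k A e1 e2 e1 = gen3 k A e1 e2 v := by
  simp only [gen3, mul_assoc, myrel_ge1]

lemma mycEG4 (w : A) : extι k A e1 e2 e1 * gen4 k A e1 e2 w = gen4 k A e1 e2 w := by
  simp only [gen4, mul_assoc, mulv myrel_e1f]

lemma mycG4E (w : A) : gen4 k A e1 e2 w * extι k A e1 e2 e1 = gen4 k A e1 e2 w := by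
  simp only [gen4, mul_assoc, myrel_ge1]

lemma myfusBr_apply
    (T1 T2 : ExtAlg k A e1 e2 →ₗ[k] ExtAlg k A e1 e2 ⊗[k] ExtAlg k A e1 e2)
    (a b : ExtAlg k A e1 e2) :
    fusBr T1 T2 a b =
      (-(2⁻¹ : k)) • sweedlerOp k (ExtAlg k A e1 e2) (T1 a) (T2 b)
      + (2⁻¹ : k) • sweedlerOp k (ExtAlg k A e1 e2) (T2 a) (T1 b) := rfl

lemma mycG3E' (v : A) (x : ExtAlg k A e1 e2) :
    gen3 k A e1 e2 v * (extι k A e1 e2 e1 * x) = gen3 k A e1 e2 v * x :=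
  mulv (mycG3E v) x

lemma mycG4E' (w : A) (x : ExtAlg k A e1 e2) :
    gen4 k A e1 e2 w * (extι k A e1 e2 e1 * x) = gen4 k A e1 e2 w * x :=
  mulv (mycG4E w) x

variable (o11 : e1 * e1 = e1) (o12 : e1 * e2 = 0) (o21 : e2 * e1 = 0)
  (o22 : e2 * e2 = e2)
set_option linter.unusedSectionVars false

include o11 o12 o21 o22

variable {δ : ExtAlg k A e1 e2 →ₗ[k] ExtAlg k A e1 e2 ⊗[k] ExtAlg k A e1 e2}

lemma myT1G1 (hδ : IsGaugeExt e1 δ) (t : A) :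
    TrOf δ (gen1 k A e1 e2 t) =
      (gen1 k A e1 e2 t * extι k A e1 e2 e1) ⊗ₜ[k] extι k A e1 e2 e1
      - extι k A e1 e2 e1 ⊗ₜ[k] (extι k A e1 e2 e1 * gen1 k A e1 e2 t) := by
  have hε := my_gauge_eps1 o12 o21 hδ
  rw [myTrOf_apply, gen1, my_gauge_sandwich hδ _ _ hε hε t]
  simp only [map_sub, map_zero, map_neg, map_add, TensorProduct.neg_tmul, TensorProduct.tmul_neg, TensorProduct.map_tmul, LinearMap.mulRight_apply,
    LinearMap.mulLeft_apply, gen1, gen2, gen3, gen4,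
    mul_assoc, map_mul, one_mul, mul_one,
    myrel_fg, myrel_gf, myrel_e1f, myrel_fe2, myrel_e2g, myrel_ge1,
    myi11 o11, myi12 o12, myi21 o21, myi22 o22,
    mye2f o21, myfe1 o21, myge2 o12, mye1g o12,
    myepsf o21, myfeps, myepsg, mygeps o12,
    myeps1 o21, my1eps o12, myeps2 o22, my2eps o22, myepseps o22,
    mulv myrel_fg, mulv myrel_gf, mulv myrel_e1f, mulv myrel_fe2, mulv myrel_e2g,
    mulv myrel_ge1,
    mulv (myi11 o11), mulv (myi12 o12), mulv (myi21 o21), mulv (myi22 o22),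
    mulv (mye2f o21), mulv (myfe1 o21), mulv (myge2 o12), mulv (mye1g o12),
    mulv (myepsf o21), mulv myfeps, mulv myepsg, mulv (mygeps o12),
    mulv (myeps1 o21), mulv (my1eps o12), mulv (myeps2 o22), mulv (my2eps o22),
    mulv (myepseps o22),
    zero_mul, mul_zero, TensorProduct.zero_tmul, TensorProduct.tmul_zero,
    sub_zero, zero_sub, add_zero, zero_add, neg_zero, sub_self, neg_neg]

lemma myT2G1 (hδ : IsGaugeExt e2 δ) (t : A) :
    TrOf δ (gen1 k A e1 e2 t) = 0 := by
  have hε := my_gauge_eps2 o22 hδ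
  rw [myTrOf_apply, gen1, my_gauge_sandwich hδ _ _ hε hε t]
  simp only [map_sub, map_zero, map_neg, map_add, TensorProduct.neg_tmul, TensorProduct.tmul_neg, TensorProduct.map_tmul, LinearMap.mulRight_apply,
    LinearMap.mulLeft_apply, gen1, gen2, gen3, gen4,
    mul_assoc, map_mul, one_mul, mul_one,
    myrel_fg, myrel_gf, myrel_e1f, myrel_fe2, myrel_e2g, myrel_ge1,
    myi11 o11, myi12 o12, myi21 o21, myi22 o22,
    mye2f o21, myfe1 o21, myge2 o12, mye1g o12,
    myepsf o21, myfeps, myepsg, mygeps o12,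
    myeps1 o21, my1eps o12, myeps2 o22, my2eps o22, myepseps o22,
    mulv myrel_fg, mulv myrel_gf, mulv myrel_e1f, mulv myrel_fe2, mulv myrel_e2g,
    mulv myrel_ge1,
    mulv (myi11 o11), mulv (myi12 o12), mulv (myi21 o21), mulv (myi22 o22),
    mulv (mye2f o21), mulv (myfe1 o21), mulv (myge2 o12), mulv (mye1g o12),
    mulv (myepsf o21), mulv myfeps, mulv myepsg, mulv (mygeps o12),
    mulv (myeps1 o21), mulv (my1eps o12), mulv (myeps2 o22), mulv (my2eps o22),
    mulv (myepseps o22),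
    zero_mul, mul_zero, TensorProduct.zero_tmul, TensorProduct.tmul_zero,
    sub_zero, zero_sub, add_zero, zero_add, neg_zero, sub_self, neg_neg]

lemma myT1G2 (hδ : IsGaugeExt e1 δ) (u : A) :
    TrOf δ (gen2 k A e1 e2 u) =
      (gen2 k A e1 e2 u * extι k A e1 e2 e1) ⊗ₜ[k] extι k A e1 e2 e1 := by
  have hε := my_gauge_eps1 o12 o21 hδ
  rw [myTrOf_apply, gen2, my_gauge_sandwich hδ _ _ hδ.on_e12 hε u]
  simp only [map_sub, map_zero, map_neg, map_add, TensorProduct.neg_tmul, TensorProduct.tmul_neg, TensorProduct.map_tmul, LinearMap.mulRight_apply,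
    LinearMap.mulLeft_apply, gen1, gen2, gen3, gen4,
    mul_assoc, map_mul, one_mul, mul_one,
    myrel_fg, myrel_gf, myrel_e1f, myrel_fe2, myrel_e2g, myrel_ge1,
    myi11 o11, myi12 o12, myi21 o21, myi22 o22,
    mye2f o21, myfe1 o21, myge2 o12, mye1g o12,
    myepsf o21, myfeps, myepsg, mygeps o12,
    myeps1 o21, my1eps o12, myeps2 o22, my2eps o22, myepseps o22,
    mulv myrel_fg, mulv myrel_gf, mulv myrel_e1f, mulv myrel_fe2, mulv myrel_e2g,
    mulv myrel_ge1,
    mulv (myi11 o11), mulv (myi12 o12), mulv (myi21 o21), mulv (myi22 o22),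
    mulv (mye2f o21), mulv (myfe1 o21), mulv (myge2 o12), mulv (mye1g o12),
    mulv (myepsf o21), mulv myfeps, mulv myepsg, mulv (mygeps o12),
    mulv (myeps1 o21), mulv (my1eps o12), mulv (myeps2 o22), mulv (my2eps o22),
    mulv (myepseps o22),
    zero_mul, mul_zero, TensorProduct.zero_tmul, TensorProduct.tmul_zero,
    sub_zero, zero_sub, add_zero, zero_add, neg_zero, sub_self, neg_neg]
  abel

lemma myT2G2 (hδ : IsGaugeExt e2 δ) (u : A) :
    TrOf δ (gen2 k A e1 e2 u) =
      -(extι k A e1 e2 e1 ⊗ₜ[k] gen2 k A e1 e2 u) := by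
  have hε := my_gauge_eps2 o22 hδ
  rw [myTrOf_apply, gen2, my_gauge_sandwich hδ _ _ hδ.on_e12 hε u]
  simp only [map_sub, map_zero, map_neg, map_add, TensorProduct.neg_tmul, TensorProduct.tmul_neg, TensorProduct.map_tmul, LinearMap.mulRight_apply,
    LinearMap.mulLeft_apply, gen1, gen2, gen3, gen4,
    mul_assoc, map_mul, one_mul, mul_one,
    myrel_fg, myrel_gf, myrel_e1f, myrel_fe2, myrel_e2g, myrel_ge1,
    myi11 o11, myi12 o12, myi21 o21, myi22 o22,
    mye2f o21, myfe1 o21, myge2 o12, mye1g o12,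
    myepsf o21, myfeps, myepsg, mygeps o12,
    myeps1 o21, my1eps o12, myeps2 o22, my2eps o22, myepseps o22,
    mulv myrel_fg, mulv myrel_gf, mulv myrel_e1f, mulv myrel_fe2, mulv myrel_e2g,
    mulv myrel_ge1,
    mulv (myi11 o11), mulv (myi12 o12), mulv (myi21 o21), mulv (myi22 o22),
    mulv (mye2f o21), mulv (myfe1 o21), mulv (myge2 o12), mulv (mye1g o12),
    mulv (myepsf o21), mulv myfeps, mulv myepsg, mulv (mygeps o12),
    mulv (myeps1 o21), mulv (my1eps o12), mulv (myeps2 o22), mulv (my2eps o22),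
    mulv (myepseps o22),
    zero_mul, mul_zero, TensorProduct.zero_tmul, TensorProduct.tmul_zero,
    sub_zero, zero_sub, add_zero, zero_add, neg_zero, sub_self, neg_neg]
  abel

lemma myT1G3 (hδ : IsGaugeExt e1 δ) (v : A) :
    TrOf δ (gen3 k A e1 e2 v) =
      -(extι k A e1 e2 e1 ⊗ₜ[k] (extι k A e1 e2 e1 * gen3 k A e1 e2 v)) := by
  have hε := my_gauge_eps1 o12 o21 hδ
  rw [myTrOf_apply, gen3, my_gauge_sandwich hδ _ _ hε hδ.on_e21 v]
  simp only [map_sub, map_zero, map_neg, map_add, TensorProduct.neg_tmul, TensorProduct.tmul_neg, TensorProduct.map_tmul, LinearMap.mulRight_apply,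
    LinearMap.mulLeft_apply, gen1, gen2, gen3, gen4,
    mul_assoc, map_mul, one_mul, mul_one,
    myrel_fg, myrel_gf, myrel_e1f, myrel_fe2, myrel_e2g, myrel_ge1,
    myi11 o11, myi12 o12, myi21 o21, myi22 o22,
    mye2f o21, myfe1 o21, myge2 o12, mye1g o12,
    myepsf o21, myfeps, myepsg, mygeps o12,
    myeps1 o21, my1eps o12, myeps2 o22, my2eps o22, myepseps o22,
    mulv myrel_fg, mulv myrel_gf, mulv myrel_e1f, mulv myrel_fe2, mulv myrel_e2g,
    mulv myrel_ge1,
    mulv (myi11 o11), mulv (myi12 o12), mulv (myi21 o21), mulv (myi22 o22),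
    mulv (mye2f o21), mulv (myfe1 o21), mulv (myge2 o12), mulv (mye1g o12),
    mulv (myepsf o21), mulv myfeps, mulv myepsg, mulv (mygeps o12),
    mulv (myeps1 o21), mulv (my1eps o12), mulv (myeps2 o22), mulv (my2eps o22),
    mulv (myepseps o22),
    zero_mul, mul_zero, TensorProduct.zero_tmul, TensorProduct.tmul_zero,
    sub_zero, zero_sub, add_zero, zero_add, neg_zero, sub_self, neg_neg]
  abel

lemma myT2G3 (hδ : IsGaugeExt e2 δ) (v : A) :
    TrOf δ (gen3 k A e1 e2 v) = gen3 k A e1 e2 v ⊗ₜ[k] extι k A e1 e2 e1 := by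
  have hε := my_gauge_eps2 o22 hδ
  rw [myTrOf_apply, gen3, my_gauge_sandwich hδ _ _ hε hδ.on_e21 v]
  simp only [map_sub, map_zero, map_neg, map_add, TensorProduct.neg_tmul, TensorProduct.tmul_neg, TensorProduct.map_tmul, LinearMap.mulRight_apply,
    LinearMap.mulLeft_apply, gen1, gen2, gen3, gen4,
    mul_assoc, map_mul, one_mul, mul_one,
    myrel_fg, myrel_gf, myrel_e1f, myrel_fe2, myrel_e2g, myrel_ge1,
    myi11 o11, myi12 o12, myi21 o21, myi22 o22,
    mye2f o21, myfe1 o21, myge2 o12, mye1g o12,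
    myepsf o21, myfeps, myepsg, mygeps o12,
    myeps1 o21, my1eps o12, myeps2 o22, my2eps o22, myepseps o22,
    mulv myrel_fg, mulv myrel_gf, mulv myrel_e1f, mulv myrel_fe2, mulv myrel_e2g,
    mulv myrel_ge1,
    mulv (myi11 o11), mulv (myi12 o12), mulv (myi21 o21), mulv (myi22 o22),
    mulv (mye2f o21), mulv (myfe1 o21), mulv (myge2 o12), mulv (mye1g o12),
    mulv (myepsf o21), mulv myfeps, mulv myepsg, mulv (mygeps o12),
    mulv (myeps1 o21), mulv (my1eps o12), mulv (myeps2 o22), mulv (my2eps o22),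
    mulv (myepseps o22),
    zero_mul, mul_zero, TensorProduct.zero_tmul, TensorProduct.tmul_zero,
    sub_zero, zero_sub, add_zero, zero_add, neg_zero, sub_self, neg_neg]
  abel

lemma myT1G4 (hδ : IsGaugeExt e1 δ) (w : A) :
    TrOf δ (gen4 k A e1 e2 w) = 0 := by
  rw [myTrOf_apply, gen4, my_gauge_sandwich hδ _ _ hδ.on_e12 hδ.on_e21 w]
  simp only [map_sub, map_zero, map_neg, map_add, TensorProduct.neg_tmul, TensorProduct.tmul_neg, TensorProduct.map_tmul, LinearMap.mulRight_apply,
    LinearMap.mulLeft_apply, gen1, gen2, gen3, gen4,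
    mul_assoc, map_mul, one_mul, mul_one,
    myrel_fg, myrel_gf, myrel_e1f, myrel_fe2, myrel_e2g, myrel_ge1,
    myi11 o11, myi12 o12, myi21 o21, myi22 o22,
    mye2f o21, myfe1 o21, myge2 o12, mye1g o12,
    myepsf o21, myfeps, myepsg, mygeps o12,
    myeps1 o21, my1eps o12, myeps2 o22, my2eps o22, myepseps o22,
    mulv myrel_fg, mulv myrel_gf, mulv myrel_e1f, mulv myrel_fe2, mulv myrel_e2g,
    mulv myrel_ge1,
    mulv (myi11 o11), mulv (myi12 o12), mulv (myi21 o21), mulv (myi22 o22),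
    mulv (mye2f o21), mulv (myfe1 o21), mulv (myge2 o12), mulv (mye1g o12),
    mulv (myepsf o21), mulv myfeps, mulv myepsg, mulv (mygeps o12),
    mulv (myeps1 o21), mulv (my1eps o12), mulv (myeps2 o22), mulv (my2eps o22),
    mulv (myepseps o22),
    zero_mul, mul_zero, TensorProduct.zero_tmul, TensorProduct.tmul_zero,
    sub_zero, zero_sub, add_zero, zero_add, neg_zero, sub_self, neg_neg]

lemma myT2G4 (hδ : IsGaugeExt e2 δ) (w : A) :
    TrOf δ (gen4 k A e1 e2 w) =
      gen4 k A e1 e2 w ⊗ₜ[k] extι k A e1 e2 e1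
      - extι k A e1 e2 e1 ⊗ₜ[k] gen4 k A e1 e2 w := by
  rw [myTrOf_apply, gen4, my_gauge_sandwich hδ _ _ hδ.on_e12 hδ.on_e21 w]
  simp only [map_sub, map_zero, map_neg, map_add, TensorProduct.neg_tmul, TensorProduct.tmul_neg, TensorProduct.map_tmul, LinearMap.mulRight_apply,
    LinearMap.mulLeft_apply, gen1, gen2, gen3, gen4,
    mul_assoc, map_mul, one_mul, mul_one,
    myrel_fg, myrel_gf, myrel_e1f, myrel_fe2, myrel_e2g, myrel_ge1,
    myi11 o11, myi12 o12, myi21 o21, myi22 o22,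
    mye2f o21, myfe1 o21, myge2 o12, mye1g o12,
    myepsf o21, myfeps, myepsg, mygeps o12,
    myeps1 o21, my1eps o12, myeps2 o22, my2eps o22, myepseps o22,
    mulv myrel_fg, mulv myrel_gf, mulv myrel_e1f, mulv myrel_fe2, mulv myrel_e2g,
    mulv myrel_ge1,
    mulv (myi11 o11), mulv (myi12 o12), mulv (myi21 o21), mulv (myi22 o22),
    mulv (mye2f o21), mulv (myfe1 o21), mulv (myge2 o12), mulv (mye1g o12),
    mulv (myepsf o21), mulv myfeps, mulv myepsg, mulv (mygeps o12),
    mulv (myeps1 o21), mulv (my1eps o12), mulv (myeps2 o22), mulv (my2eps o22),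
    mulv (myepseps o22),
    zero_mul, mul_zero, TensorProduct.zero_tmul, TensorProduct.tmul_zero,
    sub_zero, zero_sub, add_zero, zero_add, neg_zero, sub_self, neg_neg]


end MyFusionAux

set_option maxHeartbeats 4000000 in
/-- The values of the fusion double bracket `⟪-,-⟫_fus` on the four
types of generators of the fusion algebra `A^f` (Lemma dbrFUS). -/
theorem statement11 (k : Type*) [Field k] [CharZero k]
    (A : Type*) [Ring A] [Algebra k A]
    (I : Type*) [Fintype I] [DecidableEq I] (e : I → A)
    (horth : ∀ s t : I, e s * e t = if s = t then e s else 0)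
    (hsum : ∑ s : I, e s = 1)
    (i1 i2 : I) (h12 : i1 ≠ i2)
    (E1 E2 : ExtAlg k A (e i1) (e i2) →ₗ[k]
      ExtAlg k A (e i1) (e i2) ⊗[k] ExtAlg k A (e i1) (e i2))
    (hE1 : IsGaugeExt (e i1) E1) (hE2 : IsGaugeExt (e i2) E2) :
    -- abbreviations : `F` is the fusion bracket, `G1,...,G4` the generators,
    -- `E` is the idempotent `e₁ ∈ A^f`.
    ∀ F, F = fusBr (TrOf E1) (TrOf E2) →
    ∀ G1 G2 G3 G4, G1 = gen1 k A (e i1) (e i2) → G2 = gen2 k A (e i1) (e i2) →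
      G3 = gen3 k A (e i1) (e i2) → G4 = gen4 k A (e i1) (e i2) →
    ∀ E : ExtAlg k A (e i1) (e i2), E = extι k A (e i1) (e i2) (e i1) →
    (∀ t t' : A, F (G1 t) (G1 t') = 0) ∧
    (∀ t u : A, F (G1 t) (G2 u) =
      (2⁻¹ : k) • (E ⊗ₜ[k] (G1 t * G2 u) - (E * G1 t) ⊗ₜ[k] G2 u)) ∧
    (∀ t v : A, F (G1 t) (G3 v) =
      (2⁻¹ : k) • ((G3 v * G1 t) ⊗ₜ[k] E - G3 v ⊗ₜ[k] (G1 t * E))) ∧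
    (∀ t w : A, F (G1 t) (G4 w) =
      (2⁻¹ : k) • ((G4 w * G1 t) ⊗ₜ[k] E + E ⊗ₜ[k] (G1 t * G4 w)
        - G4 w ⊗ₜ[k] (G1 t * E) - (E * G1 t) ⊗ₜ[k] G4 w)) ∧
    (∀ u t : A, F (G2 u) (G1 t) =
      (2⁻¹ : k) • (G2 u ⊗ₜ[k] (E * G1 t) - (G1 t * G2 u) ⊗ₜ[k] E)) ∧
    (∀ u u' : A, F (G2 u) (G2 u') =
      (2⁻¹ : k) • (E ⊗ₜ[k] (G2 u * G2 u') - (G2 u' * G2 u) ⊗ₜ[k] E)) ∧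
    (∀ u v : A, F (G2 u) (G3 v) =
      (2⁻¹ : k) • (G2 u ⊗ₜ[k] (E * G3 v) - G3 v ⊗ₜ[k] (G2 u * E))) ∧
    (∀ u w : A, F (G2 u) (G4 w) =
      (2⁻¹ : k) • (E ⊗ₜ[k] (G2 u * G4 w) - G4 w ⊗ₜ[k] (G2 u * E))) ∧
    (∀ v t : A, F (G3 v) (G1 t) =
      (2⁻¹ : k) • ((G1 t * E) ⊗ₜ[k] G3 v - E ⊗ₜ[k] (G3 v * G1 t))) ∧
    (∀ v u : A, F (G3 v) (G2 u) =
      (2⁻¹ : k) • ((G2 u * E) ⊗ₜ[k] G3 v - (E * G3 v) ⊗ₜ[k] G2 u)) ∧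
    (∀ v v' : A, F (G3 v) (G3 v') =
      (2⁻¹ : k) • ((G3 v' * G3 v) ⊗ₜ[k] E - E ⊗ₜ[k] (G3 v * G3 v'))) ∧
    (∀ v w : A, F (G3 v) (G4 w) =
      (2⁻¹ : k) • ((G4 w * G3 v) ⊗ₜ[k] E - (E * G3 v) ⊗ₜ[k] G4 w)) ∧
    (∀ w t : A, F (G4 w) (G1 t) =
      (2⁻¹ : k) • ((G1 t * E) ⊗ₜ[k] G4 w + G4 w ⊗ₜ[k] (E * G1 t)
        - (G1 t * G4 w) ⊗ₜ[k] E - E ⊗ₜ[k] (G4 w * G1 t))) ∧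
    (∀ w u : A, F (G4 w) (G2 u) =
      (2⁻¹ : k) • ((G2 u * E) ⊗ₜ[k] G4 w - (G2 u * G4 w) ⊗ₜ[k] E)) ∧
    (∀ w v : A, F (G4 w) (G3 v) =
      (2⁻¹ : k) • (G4 w ⊗ₜ[k] (E * G3 v) - E ⊗ₜ[k] (G4 w * G3 v))) ∧
    (∀ w w' : A, F (G4 w) (G4 w') = 0) := by
  intro F hF G1 G2 G3 G4 hG1 hG2 hG3 hG4 E hE
  subst hF hG1 hG2 hG3 hG4 hE
  have o11 : e i1 * e i1 = e i1 := by rw [horth, if_pos rfl]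
  have o22 : e i2 * e i2 = e i2 := by rw [horth, if_pos rfl]
  have o12 : e i1 * e i2 = 0 := by rw [horth, if_neg h12]
  have o21 : e i2 * e i1 = 0 := by rw [horth, if_neg (Ne.symm h12)]
  refine ⟨?_, ?_, ?_, ?_, ?_, ?_, ?_, ?_, ?_, ?_, ?_, ?_, ?_, ?_, ?_, ?_⟩
  · intro t t2
    rw [myfusBr_apply, myT1G1 o11 o12 o21 o22 hE1 t, myT2G1 o11 o12 o21 o22 hE2 t,
      myT1G1 o11 o12 o21 o22 hE1 t2, myT2G1 o11 o12 o21 o22 hE2 t2]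
    simp only [map_zero, map_sub, map_add, map_neg, LinearMap.sub_apply,
      LinearMap.add_apply, LinearMap.neg_apply, LinearMap.zero_apply,
      my_sweedlerOp_tmul, smul_zero, zero_add, add_zero, sub_zero, zero_sub,
      neg_neg, mul_assoc, myi11 o11, mulv (myi11 o11),
      mycEG2, mycG3E, mycEG4, mycG4E, mycG3E', mycG4E']
    try module
  · intro t u
    rw [myfusBr_apply, myT1G1 o11 o12 o21 o22 hE1 t, myT2G1 o11 o12 o21 o22 hE2 t,
      myT1G2 o11 o12 o21 o22 hE1 u, myT2G2 o11 o12 o21 o22 hE2 u]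
    simp only [map_zero, map_sub, map_add, map_neg, LinearMap.sub_apply,
      LinearMap.add_apply, LinearMap.neg_apply, LinearMap.zero_apply,
      my_sweedlerOp_tmul, smul_zero, zero_add, add_zero, sub_zero, zero_sub,
      neg_neg, mul_assoc, myi11 o11, mulv (myi11 o11),
      mycEG2, mycG3E, mycEG4, mycG4E, mycG3E', mycG4E']
    abel_nf
    simp only [neg_smul, smul_neg, neg_neg, smul_sub, smul_add, smul_zero, sub_eq_add_neg]
    abel
  · intro t v
    rw [myfusBr_apply, myT1G1 o11 o12 o21 o22 hE1 t, myT2G1 o11 o12 o21 o22 hE2 t,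
      myT1G3 o11 o12 o21 o22 hE1 v, myT2G3 o11 o12 o21 o22 hE2 v]
    simp only [map_zero, map_sub, map_add, map_neg, LinearMap.sub_apply,
      LinearMap.add_apply, LinearMap.neg_apply, LinearMap.zero_apply,
      my_sweedlerOp_tmul, smul_zero, zero_add, add_zero, sub_zero, zero_sub,
      neg_neg, mul_assoc, myi11 o11, mulv (myi11 o11),
      mycEG2, mycG3E, mycEG4, mycG4E, mycG3E', mycG4E']
    abel_nf
    simp only [neg_smul, smul_neg, neg_neg, smul_sub, smul_add, smul_zero, sub_eq_add_neg]
    abel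
  · intro t w
    rw [myfusBr_apply, myT1G1 o11 o12 o21 o22 hE1 t, myT2G1 o11 o12 o21 o22 hE2 t,
      myT1G4 o11 o12 o21 o22 hE1 w, myT2G4 o11 o12 o21 o22 hE2 w]
    simp only [map_zero, map_sub, map_add, map_neg, LinearMap.sub_apply,
      LinearMap.add_apply, LinearMap.neg_apply, LinearMap.zero_apply,
      my_sweedlerOp_tmul, smul_zero, zero_add, add_zero, sub_zero, zero_sub,
      neg_neg, mul_assoc, myi11 o11, mulv (myi11 o11),
      mycEG2, mycG3E, mycEG4, mycG4E, mycG3E', mycG4E']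
    abel_nf
    simp only [neg_smul, smul_neg, neg_neg, smul_sub, smul_add, smul_zero, sub_eq_add_neg]
    abel
  · intro u t
    rw [myfusBr_apply, myT1G2 o11 o12 o21 o22 hE1 u, myT2G2 o11 o12 o21 o22 hE2 u,
      myT1G1 o11 o12 o21 o22 hE1 t, myT2G1 o11 o12 o21 o22 hE2 t]
    simp only [map_zero, map_sub, map_add, map_neg, LinearMap.sub_apply,
      LinearMap.add_apply, LinearMap.neg_apply, LinearMap.zero_apply,
      my_sweedlerOp_tmul, smul_zero, zero_add, add_zero, sub_zero, zero_sub,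
      neg_neg, mul_assoc, myi11 o11, mulv (myi11 o11),
      mycEG2, mycG3E, mycEG4, mycG4E, mycG3E', mycG4E']
    abel_nf
  · intro u u2
    rw [myfusBr_apply, myT1G2 o11 o12 o21 o22 hE1 u, myT2G2 o11 o12 o21 o22 hE2 u,
      myT1G2 o11 o12 o21 o22 hE1 u2, myT2G2 o11 o12 o21 o22 hE2 u2]
    simp only [map_zero, map_sub, map_add, map_neg, LinearMap.sub_apply,
      LinearMap.add_apply, LinearMap.neg_apply, LinearMap.zero_apply,
      my_sweedlerOp_tmul, smul_zero, zero_add, add_zero, sub_zero, zero_sub,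
      neg_neg, mul_assoc, myi11 o11, mulv (myi11 o11),
      mycEG2, mycG3E, mycEG4, mycG4E, mycG3E', mycG4E']
    abel_nf
    simp only [neg_smul, smul_neg, neg_neg, smul_sub, smul_add, smul_zero, sub_eq_add_neg]
    abel
  · intro u v
    rw [myfusBr_apply, myT1G2 o11 o12 o21 o22 hE1 u, myT2G2 o11 o12 o21 o22 hE2 u,
      myT1G3 o11 o12 o21 o22 hE1 v, myT2G3 o11 o12 o21 o22 hE2 v]
    simp only [map_zero, map_sub, map_add, map_neg, LinearMap.sub_apply,
      LinearMap.add_apply, LinearMap.neg_apply, LinearMap.zero_apply,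
      my_sweedlerOp_tmul, smul_zero, zero_add, add_zero, sub_zero, zero_sub,
      neg_neg, mul_assoc, myi11 o11, mulv (myi11 o11),
      mycEG2, mycG3E, mycEG4, mycG4E, mycG3E', mycG4E']
    abel_nf
    simp only [neg_smul, smul_neg, neg_neg, smul_sub, smul_add, smul_zero, sub_eq_add_neg]
    abel
  · intro u w
    rw [myfusBr_apply, myT1G2 o11 o12 o21 o22 hE1 u, myT2G2 o11 o12 o21 o22 hE2 u,
      myT1G4 o11 o12 o21 o22 hE1 w, myT2G4 o11 o12 o21 o22 hE2 w]
    simp only [map_zero, map_sub, map_add, map_neg, LinearMap.sub_apply,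
      LinearMap.add_apply, LinearMap.neg_apply, LinearMap.zero_apply,
      my_sweedlerOp_tmul, smul_zero, zero_add, add_zero, sub_zero, zero_sub,
      neg_neg, mul_assoc, myi11 o11, mulv (myi11 o11),
      mycEG2, mycG3E, mycEG4, mycG4E, mycG3E', mycG4E']
    abel_nf
    simp only [neg_smul, smul_neg, neg_neg, smul_sub, smul_add, smul_zero, sub_eq_add_neg]
    abel
  · intro v t
    rw [myfusBr_apply, myT1G3 o11 o12 o21 o22 hE1 v, myT2G3 o11 o12 o21 o22 hE2 v,
      myT1G1 o11 o12 o21 o22 hE1 t, myT2G1 o11 o12 o21 o22 hE2 t]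
    simp only [map_zero, map_sub, map_add, map_neg, LinearMap.sub_apply,
      LinearMap.add_apply, LinearMap.neg_apply, LinearMap.zero_apply,
      my_sweedlerOp_tmul, smul_zero, zero_add, add_zero, sub_zero, zero_sub,
      neg_neg, mul_assoc, myi11 o11, mulv (myi11 o11),
      mycEG2, mycG3E, mycEG4, mycG4E, mycG3E', mycG4E']
    try module
  · intro v u
    rw [myfusBr_apply, myT1G3 o11 o12 o21 o22 hE1 v, myT2G3 o11 o12 o21 o22 hE2 v,
      myT1G2 o11 o12 o21 o22 hE1 u, myT2G2 o11 o12 o21 o22 hE2 u]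
    simp only [map_zero, map_sub, map_add, map_neg, LinearMap.sub_apply,
      LinearMap.add_apply, LinearMap.neg_apply, LinearMap.zero_apply,
      my_sweedlerOp_tmul, smul_zero, zero_add, add_zero, sub_zero, zero_sub,
      neg_neg, mul_assoc, myi11 o11, mulv (myi11 o11),
      mycEG2, mycG3E, mycEG4, mycG4E, mycG3E', mycG4E']
    abel_nf
    simp only [neg_smul, smul_neg, neg_neg, smul_sub, smul_add, smul_zero, sub_eq_add_neg]
    abel
  · intro v v2
    rw [myfusBr_apply, myT1G3 o11 o12 o21 o22 hE1 v, myT2G3 o11 o12 o21 o22 hE2 v,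
      myT1G3 o11 o12 o21 o22 hE1 v2, myT2G3 o11 o12 o21 o22 hE2 v2]
    simp only [map_zero, map_sub, map_add, map_neg, LinearMap.sub_apply,
      LinearMap.add_apply, LinearMap.neg_apply, LinearMap.zero_apply,
      my_sweedlerOp_tmul, smul_zero, zero_add, add_zero, sub_zero, zero_sub,
      neg_neg, mul_assoc, myi11 o11, mulv (myi11 o11),
      mycEG2, mycG3E, mycEG4, mycG4E, mycG3E', mycG4E']
    abel_nf
    simp only [neg_smul, smul_neg, neg_neg, smul_sub, smul_add, smul_zero, sub_eq_add_neg]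
    abel
  · intro v w
    rw [myfusBr_apply, myT1G3 o11 o12 o21 o22 hE1 v, myT2G3 o11 o12 o21 o22 hE2 v,
      myT1G4 o11 o12 o21 o22 hE1 w, myT2G4 o11 o12 o21 o22 hE2 w]
    simp only [map_zero, map_sub, map_add, map_neg, LinearMap.sub_apply,
      LinearMap.add_apply, LinearMap.neg_apply, LinearMap.zero_apply,
      my_sweedlerOp_tmul, smul_zero, zero_add, add_zero, sub_zero, zero_sub,
      neg_neg, mul_assoc, myi11 o11, mulv (myi11 o11),
      mycEG2, mycG3E, mycEG4, mycG4E, mycG3E', mycG4E']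
    abel_nf
    simp only [neg_smul, smul_neg, neg_neg, smul_sub, smul_add, smul_zero, sub_eq_add_neg]
    abel
  · intro w t
    rw [myfusBr_apply, myT1G4 o11 o12 o21 o22 hE1 w, myT2G4 o11 o12 o21 o22 hE2 w,
      myT1G1 o11 o12 o21 o22 hE1 t, myT2G1 o11 o12 o21 o22 hE2 t]
    simp only [map_zero, map_sub, map_add, map_neg, LinearMap.sub_apply,
      LinearMap.add_apply, LinearMap.neg_apply, LinearMap.zero_apply,
      my_sweedlerOp_tmul, smul_zero, zero_add, add_zero, sub_zero, zero_sub,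
      neg_neg, mul_assoc, myi11 o11, mulv (myi11 o11),
      mycEG2, mycG3E, mycEG4, mycG4E, mycG3E', mycG4E']
    abel_nf
  · intro w u
    rw [myfusBr_apply, myT1G4 o11 o12 o21 o22 hE1 w, myT2G4 o11 o12 o21 o22 hE2 w,
      myT1G2 o11 o12 o21 o22 hE1 u, myT2G2 o11 o12 o21 o22 hE2 u]
    simp only [map_zero, map_sub, map_add, map_neg, LinearMap.sub_apply,
      LinearMap.add_apply, LinearMap.neg_apply, LinearMap.zero_apply,
      my_sweedlerOp_tmul, smul_zero, zero_add, add_zero, sub_zero, zero_sub,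
      neg_neg, mul_assoc, myi11 o11, mulv (myi11 o11),
      mycEG2, mycG3E, mycEG4, mycG4E, mycG3E', mycG4E']
    abel_nf
    simp only [neg_smul, smul_neg, neg_neg, smul_sub, smul_add, smul_zero, sub_eq_add_neg]
    abel
  · intro w v
    rw [myfusBr_apply, myT1G4 o11 o12 o21 o22 hE1 w, myT2G4 o11 o12 o21 o22 hE2 w,
      myT1G3 o11 o12 o21 o22 hE1 v, myT2G3 o11 o12 o21 o22 hE2 v]
    simp only [map_zero, map_sub, map_add, map_neg, LinearMap.sub_apply,
      LinearMap.add_apply, LinearMap.neg_apply, LinearMap.zero_apply,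
      my_sweedlerOp_tmul, smul_zero, zero_add, add_zero, sub_zero, zero_sub,
      neg_neg, mul_assoc, myi11 o11, mulv (myi11 o11),
      mycEG2, mycG3E, mycEG4, mycG4E, mycG3E', mycG4E']
    abel_nf
  · intro w w2
    rw [myfusBr_apply, myT1G4 o11 o12 o21 o22 hE1 w, myT2G4 o11 o12 o21 o22 hE2 w,
      myT1G4 o11 o12 o21 o22 hE1 w2, myT2G4 o11 o12 o21 o22 hE2 w2]
    simp only [map_zero, map_sub, map_add, map_neg, LinearMap.sub_apply,
      LinearMap.add_apply, LinearMap.neg_apply, LinearMap.zero_apply,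
      my_sweedlerOp_tmul, smul_zero, zero_add, add_zero, sub_zero, zero_sub,
      neg_neg, mul_assoc, myi11 o11, mulv (myi11 o11),
      mycEG2, mycG3E, mycEG4, mycG4E, mycG3E', mycG4E']
    try module
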